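/- If ℓ and n are positive integers with n/e ≤ ℓ < n, then ((2n-ℓ)/(n-ℓ))^{(n-ℓ)/n} ≤ 1.83. -/

import Mathlib

open Real

private lemma log_le_of_pow {u r : ℝ} (k : ℕ) (hu : 0 < u) (hr : 1 ≤ r)
    (h : u ≤ r ^ k) : Real.log u ≤ k * (r - 1) := by
  calc Real.log u ≤ Real.log (r ^ k) := Real.log_le_log hu h
    _ = k * Real.log r := by rw [Real.log_pow]
    _ ≤ k * (r - 1) := by
        have := Real.log_le_sub_one_of_pos (show (0:ℝ) < r by linarith)
        exact mul_le_mul_of_nonneg_left this (by positivity)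

private lemma g_mono {a b : ℝ} (ha : 0 < a) (hab : a ≤ b) :
    a * Real.log ((1 + a) / a) ≤ b * Real.log ((1 + b) / b) := by
  rcases eq_or_lt_of_le hab with rfl | hlt
  · exact le_refl _
  set g : ℝ → ℝ := fun t => t * Real.log ((1 + t) / t) with hg
  have hderiv : ∀ t : ℝ, 0 < t →
      HasDerivAt g (Real.log ((1 + t) / t) - 1 / (1 + t)) t := by
    intro t ht
    have h1t : (0:ℝ) < 1 + t := by linarith
    have h1 : HasDerivAt (fun s : ℝ => Real.log (1 + s)) ((1 + t)⁻¹) t := by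
      have := (Real.hasDerivAt_log h1t.ne').comp t ((hasDerivAt_id t).const_add 1)
      simpa [Function.comp_def] using this
    have h2 : HasDerivAt Real.log t⁻¹ t := Real.hasDerivAt_log ht.ne'
    have h3 : HasDerivAt (fun s : ℝ => s * (Real.log (1 + s) - Real.log s))
        (1 * (Real.log (1 + t) - Real.log t) + t * ((1 + t)⁻¹ - t⁻¹)) t :=
      (hasDerivAt_id t).mul (h1.sub h2)
    have heq : (fun s : ℝ => s * (Real.log (1 + s) - Real.log s)) =ᶠ[nhds t] g := by
      filter_upwards [eventually_gt_nhds ht] with s hs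
      have h1s : (0:ℝ) < 1 + s := by linarith
      simp [hg, Real.log_div h1s.ne' hs.ne']
    have h4 : HasDerivAt g
        (1 * (Real.log (1 + t) - Real.log t) + t * ((1 + t)⁻¹ - t⁻¹)) t :=
      h3.congr_of_eventuallyEq heq.symm
    convert h4 using 1
    rw [Real.log_div h1t.ne' ht.ne']
    field_simp
    ring
  have hmono : StrictMonoOn g (Set.Icc a b) := by
    apply strictMonoOn_of_deriv_pos (convex_Icc a b)
    · intro t htmem
      exact ((hderiv t (lt_of_lt_of_le ha htmem.1)).continuousAt).continuousWithinAt
    · intro t htmem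
      rw [interior_Icc] at htmem
      have ht : 0 < t := lt_trans ha htmem.1
      have h1t : (0:ℝ) < 1 + t := by linarith
      rw [(hderiv t ht).deriv]
      have hx : (0:ℝ) < t / (1 + t) := by positivity
      have hx1 : t / (1 + t) ≠ 1 := by
        intro h
        rw [div_eq_one_iff_eq h1t.ne'] at h
        linarith
      have := Real.log_lt_sub_one_of_pos hx hx1
      have hld : Real.log (t / (1 + t)) = -Real.log ((1 + t) / t) := by
        rw [Real.log_div ht.ne' h1t.ne', Real.log_div h1t.ne' ht.ne']
        ring
      have harith : t / (1 + t) - 1 = -(1 / (1 + t)) := by field_simp; ring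
      rw [hld, harith] at this
      linarith
  exact le_of_lt (hmono (Set.left_mem_Icc.mpr hab) (Set.right_mem_Icc.mpr hab) hlt)

theorem no_case_numeric (ℓ n : ℕ) (hℓ : 0 < ℓ) (hn : 0 < n)
    (h1 : (n : ℝ) / Real.exp 1 ≤ ℓ) (h2 : ℓ < n) :
    (((2 * n : ℝ) - ℓ) / ((n : ℝ) - ℓ)) ^ (((n : ℝ) - ℓ) / n) ≤ 1.83 := by
  have hn' : (0:ℝ) < n := by exact_mod_cast hn
  have hℓn : (ℓ:ℝ) < n := by exact_mod_cast h2
  set t : ℝ := ((n:ℝ) - ℓ) / n with hT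
  have htpos : 0 < t := by
    apply div_pos <;> linarith
  -- bounds on exp 1
  have hE1 : (2.7182818283:ℝ) < Real.exp 1 := Real.exp_one_gt_d9
  have hE2 : Real.exp 1 < 2.7182818286 := Real.exp_one_lt_d9
  have hEpos : (0:ℝ) < Real.exp 1 := by linarith
  set t₀ : ℝ := 1 - (Real.exp 1)⁻¹ with hT0
  have ht0pos : 0 < t₀ := by
    have : (Real.exp 1)⁻¹ < 1 := by
      rw [inv_lt_one_iff₀]; right; linarith
    simp [hT0]; linarith
  have htle : t ≤ t₀ := by
    have h' : (n:ℝ) * (Real.exp 1)⁻¹ ≤ ℓ := by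
      rwa [div_eq_mul_inv] at h1
    rw [hT, hT0, div_le_iff₀ hn']
    nlinarith
  have hbase : ((2 * n : ℝ) - ℓ) / ((n : ℝ) - ℓ) = (1 + t) / t := by
    rw [hT]
    have hne : (n:ℝ) - ℓ ≠ 0 := by linarith
    field_simp
    ring
  have hbpos : (0:ℝ) < (1 + t) / t := by positivity
  rw [hbase, Real.rpow_def_of_pos hbpos]
  have h183 : (0:ℝ) < 1.83 := by norm_num
  rw [show (1.83:ℝ) = Real.exp (Real.log 1.83) from (Real.exp_log h183).symm]
  apply Real.exp_le_exp.mpr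
  rw [mul_comm]
  -- key chain: t * log((1+t)/t) ≤ t₀ * log((1+t₀)/t₀) ≤ 0.6037 ≤ log 1.83
  have step1 : t * Real.log ((1 + t) / t) ≤ t₀ * Real.log ((1 + t₀) / t₀) :=
    g_mono htpos htle
  -- numeric bounds on t₀
  have ht0ub : t₀ ≤ 0.6321206 := by
    rw [hT0]
    have : (1/2.7182818286 : ℝ) < (Real.exp 1)⁻¹ := by
      rw [one_div]
      exact inv_strictAnti₀ hEpos hE2
    linarith [this]
  have ht0lb : (0.632120558:ℝ) ≤ t₀ := by
    rw [hT0]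
    have : (Real.exp 1)⁻¹ < 1/2.7182818283 := by
      rw [one_div]
      exact inv_strictAnti₀ (by norm_num) hE1
    linarith
  -- bound x₀ = (1+t₀)/t₀
  have hx0ub : (1 + t₀) / t₀ ≤ 2.5819768 := by
    rw [div_le_iff₀ ht0pos]
    nlinarith
  have hx0lb : (1:ℝ) ≤ (1 + t₀) / t₀ := by
    rw [le_div_iff₀ ht0pos]; linarith
  -- log bounds
  have hlog2ub : Real.log 2 < 0.6931471808 := Real.log_two_lt_d9
  have hlog2lb : (0.6931471803:ℝ) < Real.log 2 := Real.log_two_gt_d9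
  have hlogx0 : Real.log ((1 + t₀) / t₀) ≤ 0.9507471808 := by
    have hx0pos : (0:ℝ) < (1 + t₀) / t₀ := by positivity
    have hsplit : Real.log ((1 + t₀) / t₀) = Real.log 2 + Real.log ((1 + t₀) / t₀ / 2) := by
      rw [← Real.log_mul (by norm_num) (by positivity)]
      congr 1
      ring
    rw [hsplit]
    have hhalf : Real.log ((1 + t₀) / t₀ / 2) ≤ (16:ℕ) * ((1.0161:ℝ) - 1) := by
      apply log_le_of_pow 16 (by positivity) (by norm_num)
      have : (1 + t₀) / t₀ / 2 ≤ 1.2909884 := by linarith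
      calc (1 + t₀) / t₀ / 2 ≤ 1.2909884 := this
        _ ≤ (1.0161:ℝ)^16 := by norm_num
    have : ((16:ℕ):ℝ) * ((1.0161:ℝ) - 1) = 0.2576 := by norm_num
    rw [this] at hhalf
    linarith
  have hlogx0nn : 0 ≤ Real.log ((1 + t₀) / t₀) := Real.log_nonneg hx0lb
  have step2 : t₀ * Real.log ((1 + t₀) / t₀) ≤ 0.6321206 * 0.9507471808 := by
    apply mul_le_mul ht0ub hlogx0 hlogx0nn (by norm_num)
  -- lower bound on log 1.83
  have hlog183 : (0.6037071803:ℝ) ≤ Real.log 1.83 := by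
    have hq : Real.log (2 / 1.83) = Real.log 2 - Real.log 1.83 :=
      Real.log_div (by norm_num) (by norm_num)
    have hub : Real.log (2 / 1.83 : ℝ) ≤ (8:ℕ) * ((1.01118:ℝ) - 1) := by
      apply log_le_of_pow 8 (by norm_num) (by norm_num)
      norm_num
    have : ((8:ℕ):ℝ) * ((1.01118:ℝ) - 1) = 0.08944 := by norm_num
    rw [this] at hub
    linarith
  calc t * Real.log ((1 + t) / t) ≤ t₀ * Real.log ((1 + t₀) / t₀) := step1
    _ ≤ 0.6321206 * 0.9507471808 := step2
    _ ≤ 0.6037071803 := by norm_num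
    _ ≤ Real.log 1.83 := hlog183
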